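/- Identification under one-sided noncompliance with n peers: in the general-group setting, suppose: (i) the collection ((Y(d,s))_{d,s}, (D(z,w))_{z,w}) is jointly independent of (Z, W); (ii) P[Z=z, W=0] > 0 for z ∈ {0,1}; (iii) almost surely D(z,w) is nondecreasing in w for each z and D(1,0) ≥ D(0,n); (iv) one-sided noncompliance at the group level: almost surely D(0,w) = 0 for all w, and S ≤ W (no peer can be treated without being assigned, so when W = 0 all peers are untreated). Then, with observed outcome Y = Y(D(Z,W), S) and observed treatment D = D(Z,W): E[Y(0,0)] = E[Y | Z=0, W=0]; E[Y(1,0) · 1_C] = E[Y · D | Z=1, W=0]; and E[Y(0,0) · 1_C] = E[Y | Z=0, W=0] − E[Y·(1−D) | Z=1, W=0], where 1_C is the indicator of the complier event C. -/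

import Mathlib

open MeasureTheory ProbabilityTheory

noncomputable def bInd (b : Bool) : ℝ := if b then 1 else 0

section Aux

variable {Ω : Type*} [MeasurableSpace Ω] (P : Measure Ω) [IsProbabilityMeasure P]

/-- On the conditioning event, the conditional expectation of a function of the
potential outcomes/treatments equals its unconditional expectation. -/
lemma aux_key
    (Y : Bool → ℕ → Ω → ℝ) (D : Bool → ℕ → Ω → Bool) (Z : Ω → Bool) (W : Ω → ℕ)
    (hZ : Measurable Z) (hW : Measurable W)
    (hindep : IndepFun
      (fun ω => ((fun (d : Bool) (s : ℕ) => Y d s ω), (fun (z : Bool) (w : ℕ) => D z w ω)))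
      (fun ω => (Z ω, W ω)) P)
    (φ : ((Bool → ℕ → ℝ) × (Bool → ℕ → Bool)) → ℝ) (hφ : Measurable φ)
    (hint : Integrable (fun ω => φ ((fun d s => Y d s ω), (fun z w => D z w ω))) P)
    (z : Bool)
    (hpos : 0 < P ({x | Z x = z} ∩ {x | W x = 0}))
    (g : Ω → ℝ)
    (hg : ∀ᵐ ω ∂P, ω ∈ ({x | Z x = z} ∩ {x | W x = 0}) →
      g ω = φ ((fun d s => Y d s ω), (fun z w => D z w ω))) :
    ∫ ω, g ω ∂(P[|({x | Z x = z} ∩ {x | W x = 0})])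
      = ∫ ω, φ ((fun d s => Y d s ω), (fun z w => D z w ω)) ∂P := by
  set A : Set Ω := {x | Z x = z} ∩ {x | W x = 0} with hAdef
  have hA : MeasurableSet A :=
    ((hZ (MeasurableSet.singleton z)).inter (hW (MeasurableSet.singleton 0)))
  set f : Ω → ℝ := fun ω => φ ((fun d s => Y d s ω), (fun z w => D z w ω)) with hfdef
  -- preimage description of A
  have hApre : A = (fun ω => (Z ω, W ω)) ⁻¹' {(z, 0)} := by
    ext ω
    simp [hAdef, Prod.ext_iff]
  -- the indicator of A as a composition
  set ψ : Bool × ℕ → ℝ := Set.indicator {(z, (0:ℕ))} (fun _ => 1) with hψdef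
  have hψ : Measurable ψ :=
    (measurable_const.indicator (MeasurableSet.singleton _))
  have hcomp : (fun ω => ψ (Z ω, W ω)) = Set.indicator A (fun _ => (1:ℝ)) := by
    funext ω
    by_cases h : ω ∈ A
    · rw [Set.indicator_of_mem h]
      have : (Z ω, W ω) ∈ ({(z, (0:ℕ))} : Set (Bool × ℕ)) := by
        rw [hApre] at h; exact h
      rw [hψdef, Set.indicator_of_mem this]
    · rw [Set.indicator_of_notMem h]
      have : (Z ω, W ω) ∉ ({(z, (0:ℕ))} : Set (Bool × ℕ)) := by
        rw [hApre] at h; exact h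
      rw [hψdef, Set.indicator_of_notMem this]
  -- independence of f and the indicator of A
  have hIF : IndepFun f (fun ω => ψ (Z ω, W ω)) P := hindep.comp hφ hψ
  have hintInd : Integrable (fun ω => ψ (Z ω, W ω)) P := by
    rw [hcomp]
    exact (integrable_const (1:ℝ)).indicator hA
  have hmul : ∫ ω, f ω * ψ (Z ω, W ω) ∂P = (∫ ω, f ω ∂P) * ∫ ω, ψ (Z ω, W ω) ∂P :=
    hIF.integral_mul_eq_mul_integral hint.1 hintInd.1
  have hindint : ∫ ω, ψ (Z ω, W ω) ∂P = (P A).toReal := by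
    rw [hcomp, integral_indicator_const (1:ℝ) hA]; simp [measureReal_def]
  have hprod : ∫ ω, f ω * ψ (Z ω, W ω) ∂P = ∫ ω in A, f ω ∂P := by
    rw [← integral_indicator hA]
    congr 1
    funext ω
    have h2 := congrFun hcomp ω
    by_cases h : ω ∈ A
    · rw [Set.indicator_of_mem h] at h2 ⊢
      rw [h2, mul_one]
    · rw [Set.indicator_of_notMem h] at h2 ⊢
      rw [h2, mul_zero]
  have hPAne : P A ≠ 0 := hpos.ne'
  have hPAfin : P A ≠ ⊤ := (measure_lt_top P A).ne
  have hset : ∫ ω in A, g ω ∂P = ∫ ω in A, f ω ∂P := by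
    apply setIntegral_congr_ae hA
    exact hg
  calc ∫ ω, g ω ∂(P[|A])
      = ((P A)⁻¹).toReal • ∫ ω in A, g ω ∂P := by
        rw [ProbabilityTheory.cond, integral_smul_measure]
    _ = (P A).toReal⁻¹ * ∫ ω in A, f ω ∂P := by
        rw [hset, ENNReal.toReal_inv, smul_eq_mul]
    _ = (P A).toReal⁻¹ * ((∫ ω, f ω ∂P) * (P A).toReal) := by
        rw [← hprod, hmul, hindint]
    _ = ∫ ω, f ω ∂P := by
        have h0 : (P A).toReal ≠ 0 := ENNReal.toReal_ne_zero.2 ⟨hPAne, hPAfin⟩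
        rw [mul_comm (∫ ω, f ω ∂P), ← mul_assoc, inv_mul_cancel₀ h0, one_mul]

end Aux

theorem stmt_18
    {Ω : Type*} [MeasurableSpace Ω] (P : Measure Ω) [IsProbabilityMeasure P]
    (n : ℕ) (hn : 1 ≤ n)
    (Y : Bool → ℕ → Ω → ℝ) (D : Bool → ℕ → Ω → Bool)
    (Z : Ω → Bool) (W S : Ω → ℕ)
    (hYmeas : ∀ d s, Measurable (Y d s))
    (hYint : ∀ d s, Integrable (Y d s) P)
    (hDmeas : ∀ z w, Measurable (D z w))
    (hZ : Measurable Z) (hW : Measurable W) (hS : Measurable S)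
    (hWn : ∀ ω, W ω ≤ n) (hSn : ∀ ω, S ω ≤ n)
    (hpos : ∀ z : Bool, 0 < P ({x | Z x = z} ∩ {x | W x = 0}))
    (hindep : IndepFun
      (fun ω => ((fun (d : Bool) (s : ℕ) => Y d s ω), (fun (z : Bool) (w : ℕ) => D z w ω)))
      (fun ω => (Z ω, W ω)) P)
    (hmono : ∀ᵐ ω ∂P,
      (∀ z : Bool, ∀ w w' : ℕ, w ≤ w' → w' ≤ n → D z w ω ≤ D z w' ω) ∧
      D false n ω ≤ D true 0 ω)
    (hosn : ∀ᵐ ω ∂P, (∀ w ≤ n, D false w ω = false) ∧ S ω ≤ W ω)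
    :
    (∫ ω, Y false 0 ω ∂P) = (∫ ω, (Y (D (Z ω) (W ω) ω) (S ω) ω) ∂(P[|({x | Z x = false} ∩ {x | W x = 0})]))
    ∧ (∫ ω, Y true 0 ω * Set.indicator ({x | D true 0 x = true}) (fun _ => (1:ℝ)) ω ∂P)
      = (∫ ω, (Y (D (Z ω) (W ω) ω) (S ω) ω) * bInd (D (Z ω) (W ω) ω) ∂(P[|({x | Z x = true} ∩ {x | W x = 0})]))
    ∧ (∫ ω, Y false 0 ω * Set.indicator ({x | D true 0 x = true}) (fun _ => (1:ℝ)) ω ∂P)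
      = (∫ ω, (Y (D (Z ω) (W ω) ω) (S ω) ω) ∂(P[|({x | Z x = false} ∩ {x | W x = 0})])) - (∫ ω, (Y (D (Z ω) (W ω) ω) (S ω) ω) * (1 - bInd (D (Z ω) (W ω) ω)) ∂(P[|({x | Z x = true} ∩ {x | W x = 0})])) := by
  classical
  -- events where one-sided noncompliance and S ≤ W give the simplifications
  have hSzero : ∀ᵐ ω ∂P, ω ∈ ({x | Z x = false} ∩ {x | W x = 0}) →
      Y (D (Z ω) (W ω) ω) (S ω) ω = Y false 0 ω := by
    filter_upwards [hosn] with ω h hmem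
    obtain ⟨hZω, hWω⟩ := hmem
    have hS0 : S ω = 0 := Nat.le_zero.mp (hWω ▸ h.2)
    have hD0 : D false 0 ω = false := h.1 0 (Nat.zero_le n)
    simp only [Set.mem_setOf_eq] at hZω hWω
    rw [hZω, hWω, hS0, hD0]
  -- measurability of the evaluation maps
  have hev : ∀ (d : Bool) (s : ℕ),
      Measurable (fun p : (Bool → ℕ → ℝ) × (Bool → ℕ → Bool) => p.1 d s) := fun d s =>
    (measurable_pi_apply s).comp ((measurable_pi_apply d).comp measurable_fst)
  have hevD : ∀ (z : Bool) (w : ℕ),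
      Measurable (fun p : (Bool → ℕ → ℝ) × (Bool → ℕ → Bool) => p.2 z w) := fun z w =>
    (measurable_pi_apply w).comp ((measurable_pi_apply z).comp measurable_snd)
  have hbool : ∀ (u v : ℝ), Measurable (fun b : Bool => if b = true then u else v) := by
    intro u v
    exact measurable_from_top
  -- Part 1
  have h1 : (∫ ω, Y false 0 ω ∂P)
      = (∫ ω, (Y (D (Z ω) (W ω) ω) (S ω) ω) ∂(P[|({x | Z x = false} ∩ {x | W x = 0})])) := by
    refine (aux_key P Y D Z W hZ hW hindep
      (fun p => p.1 false 0) (hev false 0) (hYint false 0) false (hpos false)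
      (fun ω => Y (D (Z ω) (W ω) ω) (S ω) ω) ?_).symm
    filter_upwards [hSzero] with ω h hmem
    exact h hmem
  refine ⟨h1, ?_, ?_⟩
  -- Part 2
  · have hint2 : Integrable
        (fun ω => (fun p : (Bool → ℕ → ℝ) × (Bool → ℕ → Bool) =>
          p.1 true 0 * (if p.2 true 0 = true then (1:ℝ) else 0))
          ((fun d s => Y d s ω), (fun z w => D z w ω))) P := by
      have heq : (fun ω => Y true 0 ω * (if D true 0 ω = true then (1:ℝ) else 0))
          = Set.indicator {x | D true 0 x = true} (Y true 0) := by
        funext ω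
        by_cases h : D true 0 ω = true <;>
          simp [Set.indicator_apply, Set.mem_setOf_eq, h]
      show Integrable (fun ω => Y true 0 ω * (if D true 0 ω = true then (1:ℝ) else 0)) P
      rw [heq]
      exact (hYint true 0).indicator ((hDmeas true 0) (MeasurableSet.singleton true))
    have key2 := aux_key P Y D Z W hZ hW hindep
      (fun p => p.1 true 0 * (if p.2 true 0 = true then (1:ℝ) else 0))
      (((hev true 0)).mul ((hbool 1 0).comp (hevD true 0))) hint2 true (hpos true)
      (fun ω => (Y (D (Z ω) (W ω) ω) (S ω) ω) * bInd (D (Z ω) (W ω) ω)) ?_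
    · rw [key2]
      congr 1
      funext ω
      by_cases h : D true 0 ω = true <;>
        simp [Set.indicator_apply, Set.mem_setOf_eq, h]
    · filter_upwards [hosn] with ω h hmem
      obtain ⟨hZω, hWω⟩ := hmem
      simp only [Set.mem_setOf_eq] at hZω hWω
      have hS0 : S ω = 0 := Nat.le_zero.mp (hWω ▸ h.2)
      rw [hZω, hWω, hS0]
      by_cases hd : D true 0 ω = true
      · simp [hd, bInd]
      · simp only [Bool.not_eq_true] at hd
        simp [hd, bInd]
  -- Part 3
  · have hint3 : Integrable
        (fun ω => (fun p : (Bool → ℕ → ℝ) × (Bool → ℕ → Bool) =>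
          p.1 false 0 * (if p.2 true 0 = true then (0:ℝ) else 1))
          ((fun d s => Y d s ω), (fun z w => D z w ω))) P := by
      have heq : (fun ω => Y false 0 ω * (if D true 0 ω = true then (0:ℝ) else 1))
          = Set.indicator {x | D true 0 x = true}ᶜ (Y false 0) := by
        funext ω
        by_cases h : D true 0 ω = true <;>
          simp [Set.indicator_apply, Set.mem_setOf_eq, h]
      show Integrable (fun ω => Y false 0 ω * (if D true 0 ω = true then (0:ℝ) else 1)) P
      rw [heq]
      exact (hYint false 0).indicator
        (((hDmeas true 0) (MeasurableSet.singleton true)).compl)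
    have key3 := aux_key P Y D Z W hZ hW hindep
      (fun p => p.1 false 0 * (if p.2 true 0 = true then (0:ℝ) else 1))
      (((hev false 0)).mul ((hbool 0 1).comp (hevD true 0))) hint3 true (hpos true)
      (fun ω => (Y (D (Z ω) (W ω) ω) (S ω) ω) * (1 - bInd (D (Z ω) (W ω) ω))) ?_
    · rw [key3, ← h1]
      have hintA : Integrable
          (fun ω => Y false 0 ω * Set.indicator {x | D true 0 x = true} (fun _ => (1:ℝ)) ω) P := by
        have heq : (fun ω => Y false 0 ω * Set.indicator {x | D true 0 x = true} (fun _ => (1:ℝ)) ω)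
            = Set.indicator {x | D true 0 x = true} (Y false 0) := by
          funext ω
          by_cases h : D true 0 ω = true <;>
            simp [Set.indicator_apply, Set.mem_setOf_eq, h]
        rw [heq]
        exact (hYint false 0).indicator ((hDmeas true 0) (MeasurableSet.singleton true))
      rw [eq_sub_iff_add_eq, ← integral_add hintA hint3]
      congr 1
      funext ω
      by_cases h : D true 0 ω = true <;>
        simp [Set.indicator_apply, Set.mem_setOf_eq, h]
    · filter_upwards [hosn] with ω h hmem
      obtain ⟨hZω, hWω⟩ := hmem
      simp only [Set.mem_setOf_eq] at hZω hWω
      have hS0 : S ω = 0 := Nat.le_zero.mp (hWω ▸ h.2)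
      rw [hZω, hWω, hS0]
      by_cases hd : D true 0 ω = true
      · simp [hd, bInd]
      · simp only [Bool.not_eq_true] at hd
        simp [hd, bInd, h.1 0 (Nat.zero_le n)]
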